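/- Every continuous fixed point W of the renormalization operator 𝓡 on the Thue-Morse subshift 𝕂 with summable variations (Σ_k Var_k(W) < ∞) equals U_c with c = W(ρ₀), where U_c is the potential taking value c on [01], −c on [10], and 0 on [00] ∪ [11]. -/

import Mathlib

open Filter Topology MeasureTheory

/-- The left shift on the full 2-shift `Σ = {0,1}^ℕ`. -/
def shift (x : ℕ → Bool) : ℕ → Bool := fun n => x (n + 1)

/-- The Thue–Morse substitution `H : 0 → 01, 1 → 10`, acting on sequences. -/
def subH (x : ℕ → Bool) : ℕ → Bool :=
  fun n => if n % 2 = 0 then x (n / 2) else !x (n / 2)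

/-- The Thue–Morse sequence: `tm n` is the parity of the number of 1s in
the binary expansion of `n`. -/
def tm (n : ℕ) : Bool := (Nat.digits 2 n).count 1 % 2 == 1

/-- The fixed point of `subH` starting with 0. -/
def rho0 : ℕ → Bool := tm

/-- The fixed point of `subH` starting with 1. -/
def rho1 : ℕ → Bool := fun n => !tm n

/-- `rhoB b` is the fixed point of `subH` starting with digit `b`. -/
def rhoB : Bool → ℕ → Bool
  | false => rho0
  | true => rho1

/-- The digit-flipping involution. -/
def flipSeq (x : ℕ → Bool) : ℕ → Bool := fun n => !x n

/-- Prepend a digit to a sequence. -/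
def consTM (a : Bool) (x : ℕ → Bool) : ℕ → Bool
  | 0 => a
  | n + 1 => x n

/-- The Thue–Morse subshift: the closure of the shift orbit of `rho0`. -/
def TMK : Set (ℕ → Bool) := closure {y | ∃ n, y = shift^[n] rho0}

/-- The renormalization operator `𝓡V = V ∘ σ ∘ H + V ∘ H`. -/
def RenOp (V : (ℕ → Bool) → ℝ) : (ℕ → Bool) → ℝ :=
  fun x => V (shift (subH x)) + V (subH x)

/-- The Birkhoff sum `S_k V = ∑_{i<k} V ∘ σⁱ`. -/
def birkhoff (V : (ℕ → Bool) → ℝ) (k : ℕ) (x : ℕ → Bool) : ℝ :=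
  ∑ i ∈ Finset.range k, V (shift^[i] x)

/-- The potential `U_c`: value `c` on `[01]`, `-c` on `[10]`, `0` on `[00] ∪ [11]`. -/
def Upot (c : ℝ) (x : ℕ → Bool) : ℝ :=
  if x 0 = false ∧ x 1 = true then c
  else if x 0 = true ∧ x 1 = false then -c else 0

/-- The sliding block code `π(x)_k = 1` iff `x_k ≠ x_{k+1}`. -/
def piTM (x : ℕ → Bool) : ℕ → Bool := fun n => x n != x (n + 1)

/-- The Feigenbaum substitution `0 → 11, 1 → 10`, acting on sequences. -/
def subHfeig (x : ℕ → Bool) : ℕ → Bool :=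
  fun n => if n % 2 = 0 then true else !x (n / 2)

lemma shift_iter_apply (x : ℕ → Bool) (i j : ℕ) : shift^[i] x j = x (j + i) := by
  induction i generalizing j with
  | zero => rfl
  | succ i ih =>
    rw [Function.iterate_succ_apply']
    show shift^[i] x (j + 1) = x (j + (i + 1))
    rw [ih]; congr 1; omega

lemma subH_apply_even (x : ℕ → Bool) (m : ℕ) : subH x (2 * m) = x m := by
  unfold subH
  rw [Nat.mul_mod_right, Nat.mul_div_cancel_left _ two_pos]
  simp

lemma subH_apply_odd (x : ℕ → Bool) (m : ℕ) : subH x (2 * m + 1) = !x m := by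
  unfold subH
  rw [Nat.mul_add_mod, Nat.mul_add_div two_pos]
  simp

lemma tm_even (m : ℕ) : tm (2 * m) = tm m := by
  rcases Nat.eq_zero_or_pos m with h | h
  · simp [h]
  · unfold tm
    rw [Nat.digits_def' (b := 2) (by norm_num) (by omega),
      Nat.mul_mod_right, Nat.mul_div_cancel_left _ two_pos]
    simp [List.count_cons]

lemma tm_odd (m : ℕ) : tm (2 * m + 1) = !tm m := by
  unfold tm
  rw [Nat.digits_def' (b := 2) (by norm_num) (by omega),
    Nat.mul_add_mod, Nat.mul_add_div two_pos]
  rw [List.count_cons]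
  norm_num
  rcases Nat.even_or_odd ((Nat.digits 2 m).count 1) with ⟨k, hk⟩ | ⟨k, hk⟩
  · have h1 : (k + k + 1) % 2 = 1 := by omega
    have h2 : (k + k) % 2 = 0 := by omega
    rw [hk, h1, h2]
    decide
  · have h1 : (2 * k + 1 + 1) % 2 = 0 := by omega
    have h2 : (2 * k + 1) % 2 = 1 := by omega
    rw [hk, h1, h2]
    decide

lemma tm0 : tm 0 = false := by simp [tm]
lemma tm1 : tm 1 = true := by have := tm_odd 0; simpa [tm0] using this
lemma tm2 : tm 2 = true := by have := tm_even 1; simpa [tm1] using this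
lemma tm3 : tm 3 = false := by have := tm_odd 1; simpa [tm1] using this
lemma tm5 : tm 5 = false := by have := tm_odd 2; simpa [tm2] using this
lemma tm6 : tm 6 = false := by have := tm_even 3; simpa [tm3] using this

lemma subH_rho0 : subH rho0 = rho0 := by
  funext n
  rcases Nat.even_or_odd n with ⟨m, hm⟩ | ⟨m, hm⟩
  · rw [show n = 2 * m by omega, subH_apply_even]
    exact (tm_even m).symm
  · rw [show n = 2 * m + 1 by omega, subH_apply_odd]
    exact (tm_odd m).symm

lemma continuous_shift : Continuous shift :=
  continuous_pi fun n => continuous_apply (n + 1)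

lemma continuous_subH : Continuous subH := by
  apply continuous_pi
  intro n
  by_cases h : n % 2 = 0
  · simpa [subH, h] using continuous_apply (n / 2)
  · simpa [subH, h, Function.comp_def] using
      (continuous_of_discreteTopology (f := Bool.not)).comp (continuous_apply (n / 2))

lemma shift_mem_TMK {x : ℕ → Bool} (hx : x ∈ TMK) : shift x ∈ TMK := by
  refine map_mem_closure continuous_shift hx ?_
  rintro y ⟨n, rfl⟩
  exact ⟨n + 1, by rw [Function.iterate_succ_apply']⟩

lemma subH_shift (x : ℕ → Bool) : subH (shift x) = shift (shift (subH x)) := by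
  funext n
  show subH (shift x) n = subH x (n + 2)
  rcases Nat.even_or_odd n with ⟨m, hm⟩ | ⟨m, hm⟩
  · rw [show n = 2 * m by omega, show 2 * m + 2 = 2 * (m + 1) by ring,
      subH_apply_even, subH_apply_even]
    rfl
  · rw [show n = 2 * m + 1 by omega, show 2 * m + 1 + 2 = 2 * (m + 1) + 1 by ring,
      subH_apply_odd, subH_apply_odd]
    rfl

lemma subH_shift_iter (i : ℕ) (x : ℕ → Bool) :
    subH (shift^[i] x) = shift^[2 * i] (subH x) := by
  induction i generalizing x with
  | zero => rfl
  | succ i ih =>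
    rw [Function.iterate_succ_apply, ih (shift x), subH_shift,
      show 2 * (i + 1) = 2 * i + 1 + 1 by ring,
      Function.iterate_succ_apply, Function.iterate_succ_apply]

lemma subH_mem_TMK {x : ℕ → Bool} (hx : x ∈ TMK) : subH x ∈ TMK := by
  refine map_mem_closure continuous_subH hx ?_
  rintro y ⟨n, rfl⟩
  exact ⟨2 * n, by rw [subH_shift_iter, subH_rho0]⟩

lemma rho0_mem_TMK : rho0 ∈ TMK := subset_closure ⟨0, rfl⟩

lemma subH_agree {x y : ℕ → Bool} {k : ℕ} (h : ∀ j < k, x j = y j) :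
    ∀ j < 2 * k, subH x j = subH y j := by
  intro j hj
  have : j / 2 < k := (Nat.div_lt_iff_lt_mul two_pos).2 (by omega)
  simp only [subH, h _ this]

lemma subH_iter_agree (n : ℕ) {x y : ℕ → Bool} {k : ℕ} (h : ∀ j < k, x j = y j) :
    ∀ j < 2 ^ n * k, subH^[n] x j = subH^[n] y j := by
  induction n generalizing x y k with
  | zero => simpa using h
  | succ n ih =>
    intro j hj
    rw [Function.iterate_succ_apply, Function.iterate_succ_apply]
    rw [pow_succ, mul_comm (2 ^ n) 2, mul_assoc] at hj
    exact ih (subH_agree h) j (by rwa [mul_left_comm] at hj)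

lemma sum_range_two_mul (m : ℕ) (f : ℕ → ℝ) :
    ∑ j ∈ Finset.range (2 * m), f j = ∑ i ∈ Finset.range m, (f (2 * i) + f (2 * i + 1)) := by
  induction m with
  | zero => simp
  | succ m ih =>
    rw [show 2 * (m + 1) = 2 * m + 1 + 1 by ring, Finset.sum_range_succ,
      Finset.sum_range_succ, ih, Finset.sum_range_succ]
    ring


/-- every continuous fixed point of `𝓡` on `𝕂` with summable
variations coincides on `𝕂` with `U_c`, where `c = W(ρ₀)`. -/
theorem stmt11 (W : (ℕ → Bool) → ℝ) (hW : ContinuousOn W TMK)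
    (hfix : ∀ x ∈ TMK, W x = W (subH x) + W (shift (subH x)))
    (v : ℕ → ℝ) (hv : Summable v)
    (hvar : ∀ k : ℕ, ∀ x ∈ TMK, ∀ y ∈ TMK, (∀ j < k, x j = y j) → |W x - W y| ≤ v k) :
    ∀ x ∈ TMK, W x = Upot (W rho0) x := by
  have hmem_shift_iter : ∀ (i : ℕ) {z : ℕ → Bool}, z ∈ TMK → shift^[i] z ∈ TMK := by
    intro i
    induction i with
    | zero => intro z hz; exact hz
    | succ i ih =>
      intro z hz
      rw [Function.iterate_succ_apply']
      exact shift_mem_TMK (ih hz)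
  have hmem_subH_iter : ∀ (n : ℕ) {z : ℕ → Bool}, z ∈ TMK → subH^[n] z ∈ TMK := by
    intro n
    induction n with
    | zero => intro z hz; exact hz
    | succ n ih =>
      intro z hz
      rw [Function.iterate_succ_apply']
      exact subH_mem_TMK (ih hz)
  have hv0 : ∀ k, 0 ≤ v k := by
    intro k
    have := hvar k rho0 rho0_mem_TMK rho0 rho0_mem_TMK (fun _ _ => rfl)
    simpa using this
  -- Birkhoff identity from iterating the fixed-point equation
  have Sid : ∀ n : ℕ, ∀ x ∈ TMK, W x = ∑ i ∈ Finset.range (2 ^ n), W (shift^[i] (subH^[n] x)) := by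
    intro n
    induction n with
    | zero => intro x hx; simp
    | succ n ih =>
      intro x hx
      rw [ih x hx]
      have hkey : ∀ i ∈ Finset.range (2 ^ n),
          W (shift^[i] (subH^[n] x)) =
            W (shift^[2 * i] (subH^[n + 1] x)) + W (shift^[2 * i + 1] (subH^[n + 1] x)) := by
        intro i _
        have hz : shift^[i] (subH^[n] x) ∈ TMK := hmem_shift_iter i (hmem_subH_iter n hx)
        rw [hfix _ hz]
        have e1 : subH (shift^[i] (subH^[n] x)) = shift^[2 * i] (subH^[n + 1] x) := by
          rw [subH_shift_iter, Function.iterate_succ_apply']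
        rw [e1, ← Function.iterate_succ_apply' shift (2 * i)]
      rw [Finset.sum_congr rfl hkey,
        show (2:ℕ) ^ (n + 1) = 2 * 2 ^ n from by rw [pow_succ, mul_comm],
        sum_range_two_mul (2 ^ n) (fun j => W (shift^[j] (subH^[n + 1] x)))]
  -- W is constant on 2-cylinders of TMK
  have key : ∀ x ∈ TMK, ∀ y ∈ TMK, x 0 = y 0 → x 1 = y 1 → W x = W y := by
    intro x hx y hy h0 h1
    have hagree : ∀ j < 2, x j = y j := by
      intro j hj
      interval_cases j <;> assumption
    have hbound : ∀ n : ℕ, |W x - W y| ≤ ∑' k, v (k + (2 ^ n + 1)) := by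
      intro n
      have hsummable : Summable (fun k => v (k + (2 ^ n + 1))) := (summable_nat_add_iff _).2 hv
      rw [Sid n x hx, Sid n y hy, ← Finset.sum_sub_distrib]
      refine le_trans (Finset.abs_sum_le_sum_abs _ _) ?_
      have step : ∀ i ∈ Finset.range (2 ^ n),
          |W (shift^[i] (subH^[n] x)) - W (shift^[i] (subH^[n] y))| ≤ v (2 * 2 ^ n - i) := by
        intro i hi
        rw [Finset.mem_range] at hi
        refine hvar (2 * 2 ^ n - i) _ (hmem_shift_iter i (hmem_subH_iter n hx)) _
          (hmem_shift_iter i (hmem_subH_iter n hy)) ?_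
        intro j hj
        rw [shift_iter_apply, shift_iter_apply]
        exact subH_iter_agree n hagree (j + i) (by omega)
      refine le_trans (Finset.sum_le_sum step) ?_
      have reflz : ∑ i ∈ Finset.range (2 ^ n), v (2 * 2 ^ n - i)
          = ∑ i ∈ Finset.range (2 ^ n), v (i + (2 ^ n + 1)) := by
        rw [← Finset.sum_range_reflect (fun i => v (i + (2 ^ n + 1))) (2 ^ n)]
        refine Finset.sum_congr rfl ?_
        intro i hi
        rw [Finset.mem_range] at hi
        congr 1
        omega
      rw [reflz]
      exact hsummable.sum_le_tsum _ (fun i _ => hv0 _)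
    have hlim : Tendsto (fun n : ℕ => ∑' k, v (k + (2 ^ n + 1))) atTop (𝓝 0) := by
      have h2 : Tendsto (fun n : ℕ => 2 ^ n + 1) atTop atTop :=
        tendsto_atTop_mono (fun n => (Nat.lt_two_pow_self (n := n)).le.trans (Nat.le_succ _)) tendsto_id
      exact (tendsto_sum_nat_add v).comp h2
    have habs : |W x - W y| ≤ 0 := ge_of_tendsto' hlim hbound
    have : W x - W y = 0 := abs_eq_zero.1 (le_antisymm habs (abs_nonneg _))
    linarith
  -- coordinate computations
  have subH0 : ∀ z : ℕ → Bool, subH z 0 = z 0 := fun z => by simpa using subH_apply_even z 0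
  have subH1 : ∀ z : ℕ → Bool, subH z 1 = !z 0 := fun z => by simpa using subH_apply_odd z 0
  have subH2 : ∀ z : ℕ → Bool, subH z 2 = z 1 := fun z => by simpa using subH_apply_even z 1
  -- reference points
  set p11 : ℕ → Bool := shift rho0 with hp11def
  have hp11 : p11 ∈ TMK := shift_mem_TMK rho0_mem_TMK
  have hp11_0 : p11 0 = true := tm1
  have hp11_1 : p11 1 = true := tm2
  set p10 : ℕ → Bool := shift (shift rho0) with hp10def
  have hp10 : p10 ∈ TMK := shift_mem_TMK hp11
  have hp10_0 : p10 0 = true := tm2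
  have hp10_1 : p10 1 = false := tm3
  -- value on [11] is 0
  have e1 := hfix rho0 rho0_mem_TMK
  rw [subH_rho0] at e1
  have w11 : W (shift rho0) = 0 := by linarith
  -- value on [00]
  set q00 : ℕ → Bool := shift (subH p10) with hq00def
  have hq00 : q00 ∈ TMK := shift_mem_TMK (subH_mem_TMK hp10)
  have hq00_0 : q00 0 = false := by
    show subH p10 1 = false
    rw [subH1, hp10_0]
    rfl
  have hq00_1 : q00 1 = false := by
    show subH p10 2 = false
    rw [subH2, hp10_1]
  have e2 := hfix p10 hp10
  have hsame10 : W (subH p10) = W p10 := by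
    refine key _ (subH_mem_TMK hp10) _ hp10 ?_ ?_
    · rw [subH0]
    · rw [subH1, hp10_0, hp10_1]
      rfl
  have w00 : W q00 = 0 := by
    rw [hsame10] at e2
    linarith
  -- equation at q00 : 0 = c + w10
  have e3 := hfix q00 hq00
  have hsub_q00_0 : subH q00 0 = false := by rw [subH0, hq00_0]
  have hsub_q00_1 : subH q00 1 = true := by rw [subH1, hq00_0]; rfl
  have hA : W (subH q00) = W rho0 := by
    refine key _ (subH_mem_TMK hq00) _ rho0_mem_TMK ?_ ?_
    · rw [hsub_q00_0]; exact tm0.symm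
    · rw [hsub_q00_1]; exact tm1.symm
  have hB : W (shift (subH q00)) = W p10 := by
    refine key _ (shift_mem_TMK (subH_mem_TMK hq00)) _ hp10 ?_ ?_
    · show subH q00 1 = p10 0
      rw [hsub_q00_1, hp10_0]
    · show subH q00 2 = p10 1
      rw [subH2, hq00_1, hp10_1]
  have w10 : W p10 = -W rho0 := by
    rw [hA, hB, w00] at e3
    linarith
  -- conclusion
  intro x hx
  unfold Upot
  cases hx0 : x 0 <;> cases hx1 : x 1
  · -- 00
    simp only [hx0, hx1]
    norm_num
    rw [key x hx q00 hq00 (by rw [hx0, hq00_0]) (by rw [hx1, hq00_1])]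
    exact w00
  · -- 01
    simp only [hx0, hx1]
    norm_num
    exact key x hx rho0 rho0_mem_TMK (by rw [hx0]; exact tm0.symm) (by rw [hx1]; exact tm1.symm)
  · -- 10
    simp only [hx0, hx1]
    norm_num
    rw [key x hx p10 hp10 (by rw [hx0, hp10_0]) (by rw [hx1, hp10_1])]
    exact w10
  · -- 11
    simp only [hx0, hx1]
    norm_num
    rw [key x hx p11 hp11 (by rw [hx0, hp11_0]) (by rw [hx1, hp11_1])]
    exact w11
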